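/- For all integers k ≥ 4 and n ≥ 4 with n ≥ k, both the formula RPHP and the 3-CNF formula ERPHP have Lasserre refutations of rank 9. -/

import Mathlib

namespace NarrowProofs

open MvPolynomial

/-- A clause is a finite set of literals; a literal is a variable together with a
sign (`true` = positive literal, `false` = negative literal). -/
abbrev Clause (V : Type) := Finset (V × Bool)

/-- Twin-variable alphabet: `(v, false)` is the variable `v` itself and
`(v, true)` is its twin `v̄` (intended value `1 − v`). -/
abbrev PV (V : Type) := V × Bool

/-- The expansion of one term of a Sherali-Adams style derivation:
`∏_{i∈I} x_i · ∏_{j∈J} (1−x_j) · p`. -/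
noncomputable def expandTerm {σ : Type} (I J : Finset σ) (p : MvPolynomial σ ℝ) :
    MvPolynomial σ ℝ :=
  (∏ i ∈ I, X i) * (∏ j ∈ J, (1 - X j)) * p

/-- A Sherali-Adams style derivation of the inequality `r ≥ 0`, where each
`p_t` must come from the allowed set `Ax`: a formula
`∑_t α_t · ∏_{i∈I_t} x_i · ∏_{j∈J_t} (1−x_j) · p_t` with `α_t ≥ 0` that
expands to the polynomial `r`. -/
structure SAStyleDeriv (σ : Type) (Ax : Set (MvPolynomial σ ℝ))
    (r : MvPolynomial σ ℝ) where
  len : ℕ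
  α : Fin len → ℝ
  I : Fin len → Finset σ
  J : Fin len → Finset σ
  p : Fin len → MvPolynomial σ ℝ
  alpha_nonneg : ∀ t, 0 ≤ α t
  p_mem : ∀ t, p t ∈ Ax
  sums : ∑ t, α t • expandTerm (I t) (J t) (p t) = r

/-- The rank of the derivation is at most `d`: every expanded term has total
degree at most `d`. -/
def SAStyleDeriv.rankLE {σ : Type} {Ax : Set (MvPolynomial σ ℝ)}
    {r : MvPolynomial σ ℝ} (der : SAStyleDeriv σ Ax r) (d : ℕ) : Prop :=
  ∀ t, (expandTerm (der.I t) (der.J t) (der.p t)).totalDegree ≤ d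

/-- The size of the derivation: the total number of terms of the expanded
polynomials. -/
noncomputable def SAStyleDeriv.size {σ : Type} {Ax : Set (MvPolynomial σ ℝ)}
    {r : MvPolynomial σ ℝ} (der : SAStyleDeriv σ Ax r) : ℕ :=
  ∑ t, (expandTerm (der.I t) (der.J t) (der.p t)).support.card

/-- Boolean axioms `x²−x` and `x−x²`. -/
def boolAxioms (σ : Type) : Set (MvPolynomial σ ℝ) :=
  {p | ∃ x : σ, p = X x ^ 2 - X x ∨ p = X x - X x ^ 2}

/-- The polynomials allowed in a Sherali-Adams derivation from hypotheses `Q`: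
a hypothesis, a Boolean axiom, or the constant 1. -/
def SAAxioms (σ : Type) (Q : Set (MvPolynomial σ ℝ)) : Set (MvPolynomial σ ℝ) :=
  Q ∪ boolAxioms σ ∪ {1}

/-- The polynomials allowed in a Lasserre derivation from hypotheses `Q`:
a hypothesis, a Boolean axiom, the constant 1, or the square of an arbitrary
polynomial. -/
def LasAxioms (σ : Type) (Q : Set (MvPolynomial σ ℝ)) : Set (MvPolynomial σ ℝ) :=
  SAAxioms σ Q ∪ {p | ∃ q : MvPolynomial σ ℝ, p = q ^ 2}

/-- The SA encoding (truth = 1) of a clause: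
`∑_{i∈I} x_i + ∑_{j∈J} (1−x_j) − 1`. -/
noncomputable def encodeIneqSA {V : Type} [DecidableEq V] (C : Clause V) :
    MvPolynomial V ℝ :=
  (∑ l ∈ C, if l.2 then X l.1 else (1 - X l.1)) - 1

/-- The variables of the 3-CNF relativized pigeonhole principle `ERPHP`. -/
inductive ERVar where
  | p (u v : ℕ)
  | q (v w : ℕ)
  | r (v : ℕ)
  | rr (v v' : ℕ)
  | y (u v : ℕ)
  | z (v w : ℕ)
deriving DecidableEq

/-- The 3-CNF relativized pigeonhole principle formula with `k` pigeons chosen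
among `n` and `k-1` holes (all indices are 1-based). -/
def ERPHP (n k : ℕ) : Set (Clause ERVar) :=
  { C |
    (∃ u, 1 ≤ u ∧ u ≤ k ∧
      C = {(ERVar.p u 1, true), (ERVar.p u 2, true), (ERVar.y u 2, true)}) ∨
    (∃ u v, 1 ≤ u ∧ u ≤ k ∧ 2 ≤ v ∧ v ≤ n - 3 ∧
      C = {(ERVar.y u v, false), (ERVar.p u (v+1), true), (ERVar.y u (v+1), true)}) ∨
    (∃ u, 1 ≤ u ∧ u ≤ k ∧
      C = {(ERVar.y u (n-2), false), (ERVar.p u (n-1), true), (ERVar.p u n, true)}) ∨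
    (∃ v, 1 ≤ v ∧ v ≤ n ∧
      C = {(ERVar.r v, false), (ERVar.q v 1, true), (ERVar.z v 1, true)}) ∨
    (∃ v w, 1 ≤ v ∧ v ≤ n ∧ 1 ≤ w ∧ w ≤ k - 4 ∧
      C = {(ERVar.z v w, false), (ERVar.q v (w+1), true), (ERVar.z v (w+1), true)}) ∨
    (∃ v, 1 ≤ v ∧ v ≤ n ∧
      C = {(ERVar.z v (k-3), false), (ERVar.q v (k-2), true), (ERVar.q v (k-1), true)}) ∨
    (∃ u u' v, 1 ≤ u ∧ u ≤ k ∧ 1 ≤ u' ∧ u' ≤ k ∧ u ≠ u' ∧ 1 ≤ v ∧ v ≤ n ∧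
      C = {(ERVar.p u v, false), (ERVar.p u' v, false)}) ∨
    (∃ u v, 1 ≤ u ∧ u ≤ k ∧ 1 ≤ v ∧ v ≤ n ∧
      C = {(ERVar.p u v, false), (ERVar.r v, true)}) ∨
    (∃ v v', 1 ≤ v ∧ v ≤ n ∧ 1 ≤ v' ∧ v' ≤ n ∧ v ≠ v' ∧
      C = {(ERVar.r v, false), (ERVar.r v', false), (ERVar.rr v v', true)}) ∨
    (∃ v v' w, 1 ≤ v ∧ v ≤ n ∧ 1 ≤ v' ∧ v' ≤ n ∧ v ≠ v' ∧ 1 ≤ w ∧ w ≤ k - 1 ∧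
      C = {(ERVar.rr v v', false), (ERVar.q v w, false), (ERVar.q v' w, false)}) }

/-- The (wide-clause) relativized pigeonhole principle formula `RPHP` with `k`
pigeons chosen among `n` and `k−1` holes (1-based indices). -/
def RPHP (n k : ℕ) : Set (Clause ERVar) :=
  { C |
    (∃ u, 1 ≤ u ∧ u ≤ k ∧
      C = (Finset.Icc 1 n).image (fun v => (ERVar.p u v, true))) ∨
    (∃ u u' v, 1 ≤ u ∧ u ≤ k ∧ 1 ≤ u' ∧ u' ≤ k ∧ u ≠ u' ∧ 1 ≤ v ∧ v ≤ n ∧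
      C = {(ERVar.p u v, false), (ERVar.p u' v, false)}) ∨
    (∃ u v, 1 ≤ u ∧ u ≤ k ∧ 1 ≤ v ∧ v ≤ n ∧
      C = {(ERVar.p u v, false), (ERVar.r v, true)}) ∨
    (∃ v, 1 ≤ v ∧ v ≤ n ∧
      C = insert (ERVar.r v, false)
        ((Finset.Icc 1 (k - 1)).image (fun w => (ERVar.q v w, true)))) ∨
    (∃ v v' w, 1 ≤ v ∧ v ≤ n ∧ 1 ≤ v' ∧ v' ≤ n ∧ v ≠ v' ∧ 1 ≤ w ∧ w ≤ k - 1 ∧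
      C = {(ERVar.r v, false), (ERVar.r v', false),
           (ERVar.q v w, false), (ERVar.q v' w, false)}) }


-- ===================== auxiliary infrastructure =====================

section Infra

variable {σ : Type} {Ax : Set (MvPolynomial σ ℝ)}

/-- Membership in the "rank-9 cone": existence of a rank-9 derivation. -/
def InCone (Ax : Set (MvPolynomial σ ℝ)) (r : MvPolynomial σ ℝ) : Prop :=
  ∃ d : SAStyleDeriv σ Ax r, d.rankLE 9

lemma inCone_zero : InCone Ax 0 :=
  ⟨⟨0, Fin.elim0, Fin.elim0, Fin.elim0, Fin.elim0, fun t => t.elim0, fun t => t.elim0,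
    by simp⟩, fun t => t.elim0⟩

lemma InCone.add {r₁ r₂ : MvPolynomial σ ℝ} (h₁ : InCone Ax r₁) (h₂ : InCone Ax r₂) :
    InCone Ax (r₁ + r₂) := by
  obtain ⟨d₁, hd₁⟩ := h₁
  obtain ⟨d₂, hd₂⟩ := h₂
  refine ⟨⟨d₁.len + d₂.len, Fin.addCases d₁.α d₂.α, Fin.addCases d₁.I d₂.I,
    Fin.addCases d₁.J d₂.J, Fin.addCases d₁.p d₂.p, ?_, ?_, ?_⟩, ?_⟩
  · intro t
    refine Fin.addCases (motive := fun t => (0:ℝ) ≤ Fin.addCases d₁.α d₂.α t) ?_ ?_ t <;>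
      intro i <;> simp [d₁.alpha_nonneg, d₂.alpha_nonneg, Fin.addCases_right]
  · intro t
    refine Fin.addCases (motive := fun t => Fin.addCases d₁.p d₂.p t ∈ Ax) ?_ ?_ t <;>
      intro i <;> simp [Fin.addCases_right, d₁.p_mem, d₂.p_mem]
  · rw [Fin.sum_univ_add]
    simp only [Fin.addCases_left, Fin.addCases_right]
    rw [d₁.sums, d₂.sums]
  · intro t
    refine Fin.addCases
      (motive := fun t => (expandTerm (Fin.addCases d₁.I d₂.I t) (Fin.addCases d₁.J d₂.J t)
        (Fin.addCases d₁.p d₂.p t)).totalDegree ≤ 9) ?_ ?_ t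
    · intro i; simpa [Fin.addCases_left] using hd₁ i
    · intro i; simpa [Fin.addCases_right] using hd₂ i

lemma inCone_of_eq {r r' : MvPolynomial σ ℝ} (h : InCone Ax r) (e : r = r') : InCone Ax r' :=
  e ▸ h

lemma inCone_sum {ι : Type*} (s : Finset ι) (f : ι → MvPolynomial σ ℝ)
    (h : ∀ i ∈ s, InCone Ax (f i)) : InCone Ax (∑ i ∈ s, f i) :=
  Finset.sum_induction f _ (fun _ _ ha hb => ha.add hb) inCone_zero h

lemma deg_expandTerm (I J : Finset σ) (p : MvPolynomial σ ℝ) :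
    (expandTerm I J p).totalDegree ≤ I.card + J.card + p.totalDegree := by
  refine (totalDegree_mul _ _).trans ?_
  have h1 : ((∏ i ∈ I, X i : MvPolynomial σ ℝ)).totalDegree ≤ I.card := by
    refine (totalDegree_finset_prod _ _).trans ?_
    simp [totalDegree_X]
  have h2 : ((∏ j ∈ J, (1 - X j) : MvPolynomial σ ℝ)).totalDegree ≤ J.card := by
    refine (totalDegree_finset_prod _ _).trans ?_
    refine (Finset.sum_le_card_nsmul _ _ 1 ?_).trans (by simp)
    intro j _
    refine (totalDegree_sub _ _).trans ?_
    simp [totalDegree_X]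
  have := totalDegree_mul (∏ i ∈ I, X i : MvPolynomial σ ℝ) (∏ j ∈ J, (1 - X j))
  omega

lemma inCone_base (I J : Finset σ) (p : MvPolynomial σ ℝ) (hp : p ∈ Ax)
    (hdeg : I.card + J.card + p.totalDegree ≤ 9) : InCone Ax (expandTerm I J p) :=
  ⟨⟨1, fun _ => 1, fun _ => I, fun _ => J, fun _ => p, fun _ => zero_le_one,
    fun _ => hp, by simp⟩, fun t => (deg_expandTerm I J p).trans hdeg⟩

lemma sq_sum {ι : Type*} [DecidableEq ι] (s : Finset ι) (f : ι → MvPolynomial σ ℝ) :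
    (∑ i ∈ s, f i) ^ 2 =
      (∑ i ∈ s, f i ^ 2) + ∑ i ∈ s, ∑ j ∈ s.erase i, f i * f j := by
  rw [sq, Finset.sum_mul_sum, ← Finset.sum_add_distrib]
  refine Finset.sum_congr rfl fun i hi => ?_
  rw [← Finset.add_sum_erase _ _ hi, sq]

lemma telescope (f : ℕ → MvPolynomial σ ℝ) :
    ∀ b a, a ≤ b + 1 → ∑ v ∈ Finset.Icc a b, (f (v + 1) - f v) = f (b + 1) - f a := by
  intro b
  induction b with
  | zero =>
    intro a ha
    interval_cases a
    · simp
    · simp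
  | succ b ih =>
    intro a ha
    rcases le_or_gt a (b + 1) with h | h
    · rw [Finset.sum_Icc_succ_top h, ih a h]
      ring
    · have : a = b + 2 := by omega
      subst this
      simp

variable [DecidableEq σ]

lemma expandTerm_nil (p : MvPolynomial σ ℝ) :
    expandTerm ∅ ∅ p = p := by
  simp [expandTerm]

lemma expandTerm_I1 (a : σ) (p : MvPolynomial σ ℝ) :
    expandTerm {a} ∅ p = X a * p := by
  simp [expandTerm]

lemma expandTerm_J1 (a : σ) (p : MvPolynomial σ ℝ) :
    expandTerm ∅ {a} p = (1 - X a) * p := by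
  simp [expandTerm]

lemma expandTerm_I2 (a b : σ) (hab : a ≠ b) (p : MvPolynomial σ ℝ) :
    expandTerm {a, b} ∅ p = X a * X b * p := by
  rw [expandTerm, Finset.prod_insert (by simp [hab]), Finset.prod_singleton]
  simp

lemma expandTerm_I1J1 (a b : σ) (p : MvPolynomial σ ℝ) :
    expandTerm {a} {b} p = X a * (1 - X b) * p := by
  simp [expandTerm, mul_assoc]

lemma expandTerm_I2J1 (a b c : σ) (hab : a ≠ b) (p : MvPolynomial σ ℝ) :
    expandTerm {a, b} {c} p = X a * X b * (1 - X c) * p := by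
  rw [expandTerm, Finset.prod_insert (by simp [hab]), Finset.prod_singleton]
  simp [mul_assoc]

lemma expandTerm_I3 (a b c : σ) (hab : a ≠ b) (hac : a ≠ c) (hbc : b ≠ c)
    (p : MvPolynomial σ ℝ) :
    expandTerm {a, b, c} ∅ p = X a * X b * X c * p := by
  rw [expandTerm, Finset.prod_insert (by simp [hab, hac]),
    Finset.prod_insert (by simp [hbc]), Finset.prod_singleton]
  simp [mul_assoc]

lemma expandTerm_I4 (a b c d : σ) (hab : a ≠ b) (hac : a ≠ c) (had : a ≠ d)
    (hbc : b ≠ c) (hbd : b ≠ d) (hcd : c ≠ d) (p : MvPolynomial σ ℝ) :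
    expandTerm {a, b, c, d} ∅ p = X a * X b * X c * X d * p := by
  rw [expandTerm, Finset.prod_insert (by simp [hab, hac, had]),
    Finset.prod_insert (by simp [hbc, hbd]), Finset.prod_insert (by simp [hcd]),
    Finset.prod_singleton]
  simp [mul_assoc]

omit [DecidableEq σ] in
lemma deg_X_le (a : σ) : (X a : MvPolynomial σ ℝ).totalDegree ≤ 1 := by
  simp [totalDegree_X]

omit [DecidableEq σ] in
lemma deg_sum_le {ι : Type*} (s : Finset ι) (f : ι → MvPolynomial σ ℝ) (d : ℕ)
    (h : ∀ i ∈ s, (f i).totalDegree ≤ d) : (∑ i ∈ s, f i).totalDegree ≤ d :=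
  (totalDegree_finset_sum _ _).trans (Finset.sup_le h)

omit [DecidableEq σ] in
lemma deg_one_sub (p : MvPolynomial σ ℝ) (d : ℕ) (hd : p.totalDegree ≤ d) :
    (1 - p).totalDegree ≤ d := by
  refine (totalDegree_sub _ _).trans ?_
  simp [hd]

omit [DecidableEq σ] in
lemma deg_sub (p q : MvPolynomial σ ℝ) (d : ℕ) (hp : p.totalDegree ≤ d)
    (hq : q.totalDegree ≤ d) : (p - q).totalDegree ≤ d :=
  (totalDegree_sub _ _).trans (max_le hp hq)

omit [DecidableEq σ] in
lemma deg_bool (a : σ) : (X a ^ 2 - X a : MvPolynomial σ ℝ).totalDegree ≤ 2 := by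
  refine deg_sub _ _ _ ((totalDegree_pow _ _).trans (by simp [totalDegree_X])) ?_
  simp [totalDegree_X]

end Infra


-- ===================== the generic rank-9 refutation =====================

section Main

open Finset

variable {Ax : Set (MvPolynomial ERVar ℝ)}

lemma card_le2 {σ : Type} [DecidableEq σ] (a b : σ) : ({a, b} : Finset σ).card ≤ 2 :=
  (Finset.card_insert_le _ _).trans (by simp)

lemma card_le3 {σ : Type} [DecidableEq σ] (a b c : σ) : ({a, b, c} : Finset σ).card ≤ 3 :=
  (Finset.card_insert_le _ _).trans (Nat.succ_le_succ (card_le2 b c))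

lemma card_le4 {σ : Type} [DecidableEq σ] (a b c d : σ) :
    ({a, b, c, d} : Finset σ).card ≤ 4 :=
  (Finset.card_insert_le _ _).trans (Nat.succ_le_succ (card_le3 b c d))

lemma inCone_base' {x p : MvPolynomial ERVar ℝ} (I J : Finset ERVar) (hp : p ∈ Ax)
    (hdeg : I.card + J.card + p.totalDegree ≤ 9) (he : expandTerm I J p = x) :
    InCone Ax x :=
  inCone_of_eq (inCone_base I J p hp hdeg) he

lemma deg_bool' {σ : Type} (a : σ) :
    (X a - X a ^ 2 : MvPolynomial σ ℝ).totalDegree ≤ 2 :=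
  deg_sub _ _ _ ((deg_X_le a).trans one_le_two)
    ((totalDegree_pow _ _).trans (by simpa using Nat.mul_le_mul_left 2 (deg_X_le a)))

/-- The per-hole-`v` pigeon identity. -/
lemma pigId (k v : ℕ) :
    (X (ERVar.r v) * (1 - ∑ u ∈ Icc 1 k, X (ERVar.p u v)) ^ 2
      + ∑ u ∈ Icc 1 k, X (ERVar.r v) * (X (ERVar.p u v) - X (ERVar.p u v) ^ 2)
      + ∑ u ∈ Icc 1 k, ∑ u' ∈ (Icc 1 k).erase u,
          (X (ERVar.r v) * X (ERVar.p u v) * X (ERVar.p u' v) *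
              (1 - X (ERVar.p u v) - X (ERVar.p u' v))
            + X (ERVar.r v) * X (ERVar.p u' v) * (X (ERVar.p u v) ^ 2 - X (ERVar.p u v))
            + X (ERVar.r v) * X (ERVar.p u v) * (X (ERVar.p u' v) ^ 2 - X (ERVar.p u' v)))
      + ∑ u ∈ Icc 1 k, ((1 - X (ERVar.r v)) * (X (ERVar.r v) - X (ERVar.p u v))
            + (X (ERVar.r v) ^ 2 - X (ERVar.r v)))
      : MvPolynomial ERVar ℝ)
    = X (ERVar.r v) - ∑ u ∈ Icc 1 k, X (ERVar.p u v) := by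
  have e2 : ∑ u ∈ Icc 1 k,
        (X (ERVar.r v) * (X (ERVar.p u v) - X (ERVar.p u v) ^ 2) : MvPolynomial ERVar ℝ)
      = X (ERVar.r v) * ((∑ u ∈ Icc 1 k, X (ERVar.p u v))
          - ∑ u ∈ Icc 1 k, X (ERVar.p u v) ^ 2) := by
    rw [mul_sub, Finset.mul_sum, Finset.mul_sum, ← Finset.sum_sub_distrib]
    exact Finset.sum_congr rfl fun u _ => by ring
  have e3 : ∑ u ∈ Icc 1 k, ∑ u' ∈ (Icc 1 k).erase u,
        ((X (ERVar.r v) * X (ERVar.p u v) * X (ERVar.p u' v) *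
            (1 - X (ERVar.p u v) - X (ERVar.p u' v))
          + X (ERVar.r v) * X (ERVar.p u' v) * (X (ERVar.p u v) ^ 2 - X (ERVar.p u v))
          + X (ERVar.r v) * X (ERVar.p u v) * (X (ERVar.p u' v) ^ 2 - X (ERVar.p u' v)))
          : MvPolynomial ERVar ℝ)
      = -(X (ERVar.r v) * ∑ u ∈ Icc 1 k, ∑ u' ∈ (Icc 1 k).erase u,
          X (ERVar.p u v) * X (ERVar.p u' v)) := by
    rw [Finset.mul_sum, ← Finset.sum_neg_distrib]
    refine Finset.sum_congr rfl fun u _ => ?_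
    rw [Finset.mul_sum, ← Finset.sum_neg_distrib]
    exact Finset.sum_congr rfl fun u' _ => by ring
  have e4 : ∑ u ∈ Icc 1 k,
        (((1 - X (ERVar.r v)) * (X (ERVar.r v) - X (ERVar.p u v))
          + (X (ERVar.r v) ^ 2 - X (ERVar.r v))) : MvPolynomial ERVar ℝ)
      = X (ERVar.r v) * (∑ u ∈ Icc 1 k, X (ERVar.p u v))
          - ∑ u ∈ Icc 1 k, X (ERVar.p u v) := by
    rw [Finset.mul_sum, ← Finset.sum_sub_distrib]
    exact Finset.sum_congr rfl fun u _ => by ring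
  have hs := sq_sum (Icc 1 k) (fun u => (X (ERVar.p u v) : MvPolynomial ERVar ℝ))
  rw [e2, e3, e4]
  linear_combination (X (ERVar.r v) : MvPolynomial ERVar ℝ) * hs

/-- The per-hole-`w` counting identity. -/
lemma holeId (n w : ℕ) :
    ((1 - ∑ v ∈ Icc 1 n, X (ERVar.r v) * X (ERVar.q v w)) ^ 2
      + ∑ v ∈ Icc 1 n,
          (X (ERVar.r v) * X (ERVar.q v w) * (1 - X (ERVar.r v)) * 1
            + X (ERVar.r v) * X (ERVar.q v w) * (1 - X (ERVar.q v w)) * 1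
            + X (ERVar.q v w) * (1 - X (ERVar.q v w)) * (X (ERVar.r v) ^ 2 - X (ERVar.r v)))
      + ∑ v ∈ Icc 1 n, ∑ v' ∈ (Icc 1 n).erase v,
          (X (ERVar.r v) * X (ERVar.r v') * X (ERVar.q v w) * X (ERVar.q v' w) *
              (3 - X (ERVar.r v) - X (ERVar.r v') - X (ERVar.q v w) - X (ERVar.q v' w))
            + X (ERVar.r v') * X (ERVar.q v w) * X (ERVar.q v' w) *
                (X (ERVar.r v) ^ 2 - X (ERVar.r v))
            + X (ERVar.r v) * X (ERVar.q v w) * X (ERVar.q v' w) *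
                (X (ERVar.r v') ^ 2 - X (ERVar.r v'))
            + X (ERVar.r v) * X (ERVar.r v') * X (ERVar.q v' w) *
                (X (ERVar.q v w) ^ 2 - X (ERVar.q v w))
            + X (ERVar.r v) * X (ERVar.r v') * X (ERVar.q v w) *
                (X (ERVar.q v' w) ^ 2 - X (ERVar.q v' w)))
      : MvPolynomial ERVar ℝ)
    = 1 - ∑ v ∈ Icc 1 n, X (ERVar.r v) * X (ERVar.q v w) := by
  have e2 : ∑ v ∈ Icc 1 n,
        ((X (ERVar.r v) * X (ERVar.q v w) * (1 - X (ERVar.r v)) * 1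
          + X (ERVar.r v) * X (ERVar.q v w) * (1 - X (ERVar.q v w)) * 1
          + X (ERVar.q v w) * (1 - X (ERVar.q v w)) * (X (ERVar.r v) ^ 2 - X (ERVar.r v)))
          : MvPolynomial ERVar ℝ)
      = (∑ v ∈ Icc 1 n, X (ERVar.r v) * X (ERVar.q v w))
          - ∑ v ∈ Icc 1 n, (X (ERVar.r v) * X (ERVar.q v w)) ^ 2 := by
    rw [← Finset.sum_sub_distrib]
    exact Finset.sum_congr rfl fun v _ => by ring
  have e3 : ∑ v ∈ Icc 1 n, ∑ v' ∈ (Icc 1 n).erase v,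
        ((X (ERVar.r v) * X (ERVar.r v') * X (ERVar.q v w) * X (ERVar.q v' w) *
            (3 - X (ERVar.r v) - X (ERVar.r v') - X (ERVar.q v w) - X (ERVar.q v' w))
          + X (ERVar.r v') * X (ERVar.q v w) * X (ERVar.q v' w) *
              (X (ERVar.r v) ^ 2 - X (ERVar.r v))
          + X (ERVar.r v) * X (ERVar.q v w) * X (ERVar.q v' w) *
              (X (ERVar.r v') ^ 2 - X (ERVar.r v'))
          + X (ERVar.r v) * X (ERVar.r v') * X (ERVar.q v' w) *
              (X (ERVar.q v w) ^ 2 - X (ERVar.q v w))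
          + X (ERVar.r v) * X (ERVar.r v') * X (ERVar.q v w) *
              (X (ERVar.q v' w) ^ 2 - X (ERVar.q v' w))) : MvPolynomial ERVar ℝ)
      = -∑ v ∈ Icc 1 n, ∑ v' ∈ (Icc 1 n).erase v,
          (X (ERVar.r v) * X (ERVar.q v w)) * (X (ERVar.r v') * X (ERVar.q v' w)) := by
    rw [← Finset.sum_neg_distrib]
    refine Finset.sum_congr rfl fun v _ => ?_
    rw [← Finset.sum_neg_distrib]
    exact Finset.sum_congr rfl fun v' _ => by ring
  have hs := sq_sum (Icc 1 n)
    (fun v => (X (ERVar.r v) * X (ERVar.q v w) : MvPolynomial ERVar ℝ))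
  rw [e2, e3]
  linear_combination hs

lemma cone_pig (hbool : boolAxioms ERVar ⊆ Ax)
    (hsq : ∀ q : MvPolynomial ERVar ℝ, q ^ 2 ∈ Ax)
    (hB : ∀ u ∈ Icc 1 k, ∀ u' ∈ Icc 1 k, u ≠ u' → ∀ v ∈ Icc 1 n,
      (1 - X (ERVar.p u v) - X (ERVar.p u' v) : MvPolynomial ERVar ℝ) ∈ Ax)
    (hC : ∀ u ∈ Icc 1 k, ∀ v ∈ Icc 1 n,
      (X (ERVar.r v) - X (ERVar.p u v) : MvPolynomial ERVar ℝ) ∈ Ax)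
    (v : ℕ) (hv : v ∈ Icc 1 n) :
    InCone Ax (X (ERVar.r v) - ∑ u ∈ Icc 1 k, X (ERVar.p u v)) := by
  refine inCone_of_eq ((((?_ : InCone Ax _).add ?_).add ?_).add ?_) (pigId k v)
  · refine inCone_base' {ERVar.r v} ∅ (hsq _) ?_ (expandTerm_I1 _ _)
    have hd : ((1 - ∑ u ∈ Icc 1 k, X (ERVar.p u v) : MvPolynomial ERVar ℝ) ^ 2).totalDegree
        ≤ 2 := by
      refine (totalDegree_pow _ _).trans ?_
      have := deg_one_sub (∑ u ∈ Icc 1 k, X (ERVar.p u v) : MvPolynomial ERVar ℝ) 1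
        (deg_sum_le _ _ _ fun u _ => deg_X_le _)
      omega
    simp only [Finset.card_singleton, Finset.card_empty]
    omega
  · refine inCone_sum _ _ fun u _ => ?_
    refine inCone_base' {ERVar.r v} ∅ (hbool ⟨ERVar.p u v, Or.inr rfl⟩) ?_ (expandTerm_I1 _ _)
    have := deg_bool' (σ := ERVar) (ERVar.p u v)
    simp only [Finset.card_singleton, Finset.card_empty]
    omega
  · refine inCone_sum _ _ fun u hu => inCone_sum _ _ fun u' hu' => ?_
    have hne : u ≠ u' := (Finset.ne_of_mem_erase hu').symm
    have hu'' : u' ∈ Icc 1 k := Finset.mem_of_mem_erase hu'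
    have hab : ERVar.r v ≠ ERVar.p u v := by simp
    have hac : ERVar.r v ≠ ERVar.p u' v := by simp
    have hbc : ERVar.p u v ≠ ERVar.p u' v := by simp [hne]
    refine ((?_ : InCone Ax _).add ?_).add ?_
    · refine inCone_base' {ERVar.r v, ERVar.p u v, ERVar.p u' v} ∅
        (hB u hu u' hu'' hne v hv) ?_ (expandTerm_I3 _ _ _ hab hac hbc _)
      have h3 := card_le3 (ERVar.r v) (ERVar.p u v) (ERVar.p u' v)
      have hd : (1 - X (ERVar.p u v) - X (ERVar.p u' v) : MvPolynomial ERVar ℝ).totalDegree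
          ≤ 1 := deg_sub _ _ _ (deg_one_sub _ _ (deg_X_le _)) (deg_X_le _)
      simp only [Finset.card_empty]
      omega
    · refine inCone_base' {ERVar.r v, ERVar.p u' v} ∅
        (hbool ⟨ERVar.p u v, Or.inl rfl⟩) ?_ (expandTerm_I2 _ _ hac _)
      have h2 := card_le2 (ERVar.r v) (ERVar.p u' v)
      have := deg_bool (σ := ERVar) (ERVar.p u v)
      simp only [Finset.card_empty]
      omega
    · refine inCone_base' {ERVar.r v, ERVar.p u v} ∅
        (hbool ⟨ERVar.p u' v, Or.inl rfl⟩) ?_ (expandTerm_I2 _ _ hab _)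
      have h2 := card_le2 (ERVar.r v) (ERVar.p u v)
      have := deg_bool (σ := ERVar) (ERVar.p u' v)
      simp only [Finset.card_empty]
      omega
  · refine inCone_sum _ _ fun u hu => ?_
    refine (?_ : InCone Ax _).add ?_
    · exact inCone_base' ∅ {ERVar.r v} (hC u hu v hv)
        (by
          have hd : (X (ERVar.r v) - X (ERVar.p u v) : MvPolynomial ERVar ℝ).totalDegree ≤ 1 :=
            deg_sub _ _ _ (deg_X_le _) (deg_X_le _)
          simp only [Finset.card_singleton, Finset.card_empty]
          omega)
        (expandTerm_J1 _ _)
    · exact inCone_base' ∅ ∅ (hbool ⟨ERVar.r v, Or.inl rfl⟩)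
        (by
          have := deg_bool (σ := ERVar) (ERVar.r v)
          simp only [Finset.card_empty]
          omega)
        (expandTerm_nil _)

lemma cone_hole (hbool : boolAxioms ERVar ⊆ Ax) (hone : (1 : MvPolynomial ERVar ℝ) ∈ Ax)
    (hsq : ∀ q : MvPolynomial ERVar ℝ, q ^ 2 ∈ Ax)
    (hE : ∀ v ∈ Icc 1 n, ∀ v' ∈ Icc 1 n, v ≠ v' → ∀ w ∈ Icc 1 (k - 1),
      InCone Ax (X (ERVar.r v) * X (ERVar.r v') * X (ERVar.q v w) * X (ERVar.q v' w) *
        (3 - X (ERVar.r v) - X (ERVar.r v') - X (ERVar.q v w) - X (ERVar.q v' w))))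
    (w : ℕ) (hw : w ∈ Icc 1 (k - 1)) :
    InCone Ax (1 - ∑ v ∈ Icc 1 n, X (ERVar.r v) * X (ERVar.q v w)) := by
  refine inCone_of_eq (((?_ : InCone Ax _).add ?_).add ?_) (holeId n w)
  · refine inCone_base' ∅ ∅ (hsq _) ?_ (expandTerm_nil _)
    have hd : ((1 - ∑ v ∈ Icc 1 n, X (ERVar.r v) * X (ERVar.q v w) :
        MvPolynomial ERVar ℝ) ^ 2).totalDegree ≤ 4 := by
      refine (totalDegree_pow _ _).trans ?_
      have : ((1 - ∑ v ∈ Icc 1 n, X (ERVar.r v) * X (ERVar.q v w) :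
          MvPolynomial ERVar ℝ)).totalDegree ≤ 2 := by
        refine deg_one_sub _ _ (deg_sum_le _ _ _ fun v _ => ?_)
        have := totalDegree_mul (X (ERVar.r v) : MvPolynomial ERVar ℝ) (X (ERVar.q v w))
        have h1 := deg_X_le (σ := ERVar) (ERVar.r v)
        have h2 := deg_X_le (σ := ERVar) (ERVar.q v w)
        omega
      omega
    simp only [Finset.card_empty]
    omega
  · refine inCone_sum _ _ fun v _ => ?_
    have hrq : ERVar.r v ≠ ERVar.q v w := by simp
    refine ((?_ : InCone Ax _).add ?_).add ?_
    · exact inCone_base' {ERVar.r v, ERVar.q v w} {ERVar.r v} hone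
        (by
          have h2 := card_le2 (ERVar.r v) (ERVar.q v w)
          simp only [Finset.card_singleton, totalDegree_one]
          omega)
        (expandTerm_I2J1 _ _ _ hrq _)
    · exact inCone_base' {ERVar.r v, ERVar.q v w} {ERVar.q v w} hone
        (by
          have h2 := card_le2 (ERVar.r v) (ERVar.q v w)
          simp only [Finset.card_singleton, totalDegree_one]
          omega)
        (expandTerm_I2J1 _ _ _ hrq _)
    · exact inCone_base' {ERVar.q v w} {ERVar.q v w} (hbool ⟨ERVar.r v, Or.inl rfl⟩)
        (by
          have := deg_bool (σ := ERVar) (ERVar.r v)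
          simp only [Finset.card_singleton]
          omega)
        (expandTerm_I1J1 _ _ _)
  · refine inCone_sum _ _ fun v hv => inCone_sum _ _ fun v' hv' => ?_
    have hne : v ≠ v' := (Finset.ne_of_mem_erase hv').symm
    have hv'' : v' ∈ Icc 1 n := Finset.mem_of_mem_erase hv'
    have d12 : ERVar.r v ≠ ERVar.r v' := by simp [hne]
    have d13 : ERVar.r v ≠ ERVar.q v w := by simp
    have d14 : ERVar.r v ≠ ERVar.q v' w := by simp
    have d23 : ERVar.r v' ≠ ERVar.q v w := by simp
    have d24 : ERVar.r v' ≠ ERVar.q v' w := by simp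
    have d34 : ERVar.q v w ≠ ERVar.q v' w := by simp [hne]
    refine ((((hE v hv v' hv'' hne w hw).add ?_).add ?_).add ?_).add ?_
    · exact inCone_base' {ERVar.r v', ERVar.q v w, ERVar.q v' w} ∅
        (hbool ⟨ERVar.r v, Or.inl rfl⟩)
        (by
          have h3 := card_le3 (ERVar.r v') (ERVar.q v w) (ERVar.q v' w)
          have := deg_bool (σ := ERVar) (ERVar.r v)
          simp only [Finset.card_empty]
          omega)
        (expandTerm_I3 _ _ _ d23.symm.symm d24 d34 _)
    · exact inCone_base' {ERVar.r v, ERVar.q v w, ERVar.q v' w} ∅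
        (hbool ⟨ERVar.r v', Or.inl rfl⟩)
        (by
          have h3 := card_le3 (ERVar.r v) (ERVar.q v w) (ERVar.q v' w)
          have := deg_bool (σ := ERVar) (ERVar.r v')
          simp only [Finset.card_empty]
          omega)
        (expandTerm_I3 _ _ _ d13 d14 d34 _)
    · exact inCone_base' {ERVar.r v, ERVar.r v', ERVar.q v' w} ∅
        (hbool ⟨ERVar.q v w, Or.inl rfl⟩)
        (by
          have h3 := card_le3 (ERVar.r v) (ERVar.r v') (ERVar.q v' w)
          have := deg_bool (σ := ERVar) (ERVar.q v w)
          simp only [Finset.card_empty]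
          omega)
        (expandTerm_I3 _ _ _ d12 d14 d24 _)
    · exact inCone_base' {ERVar.r v, ERVar.r v', ERVar.q v w} ∅
        (hbool ⟨ERVar.q v' w, Or.inl rfl⟩)
        (by
          have h3 := card_le3 (ERVar.r v) (ERVar.r v') (ERVar.q v w)
          have := deg_bool (σ := ERVar) (ERVar.q v' w)
          simp only [Finset.card_empty]
          omega)
        (expandTerm_I3 _ _ _ d12 d13 d23 _)

/-- The generic rank-9 Lasserre refutation, from cone membership of the key
combinations (which hold both for `RPHP` and `ERPHP`). -/
lemma main_cone (n k : ℕ) (hk : 1 ≤ k)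
    (hbool : boolAxioms ERVar ⊆ Ax) (hone : (1 : MvPolynomial ERVar ℝ) ∈ Ax)
    (hsq : ∀ q : MvPolynomial ERVar ℝ, q ^ 2 ∈ Ax)
    (hA : ∀ u ∈ Icc 1 k, InCone Ax ((∑ v ∈ Icc 1 n, X (ERVar.p u v)) - 1))
    (hB : ∀ u ∈ Icc 1 k, ∀ u' ∈ Icc 1 k, u ≠ u' → ∀ v ∈ Icc 1 n,
      (1 - X (ERVar.p u v) - X (ERVar.p u' v) : MvPolynomial ERVar ℝ) ∈ Ax)
    (hC : ∀ u ∈ Icc 1 k, ∀ v ∈ Icc 1 n,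
      (X (ERVar.r v) - X (ERVar.p u v) : MvPolynomial ERVar ℝ) ∈ Ax)
    (hD : ∀ v ∈ Icc 1 n, InCone Ax
      (X (ERVar.r v) * ((∑ w ∈ Icc 1 (k - 1), X (ERVar.q v w)) - X (ERVar.r v))))
    (hE : ∀ v ∈ Icc 1 n, ∀ v' ∈ Icc 1 n, v ≠ v' → ∀ w ∈ Icc 1 (k - 1),
      InCone Ax (X (ERVar.r v) * X (ERVar.r v') * X (ERVar.q v w) * X (ERVar.q v' w) *
        (3 - X (ERVar.r v) - X (ERVar.r v') - X (ERVar.q v w) - X (ERVar.q v' w)))) :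
    InCone Ax (-1) := by
  have g1 : InCone Ax (∑ v ∈ Icc 1 n,
      (X (ERVar.r v) - ∑ u ∈ Icc 1 k, X (ERVar.p u v))) :=
    inCone_sum _ _ fun v hv => cone_pig hbool hsq hB hC v hv
  have g2 : InCone Ax (∑ u ∈ Icc 1 k,
      ((∑ v ∈ Icc 1 n, X (ERVar.p u v)) - 1)) := inCone_sum _ _ hA
  have g3 : InCone Ax (∑ w ∈ Icc 1 (k - 1),
      (1 - ∑ v ∈ Icc 1 n, X (ERVar.r v) * X (ERVar.q v w))) :=
    inCone_sum _ _ fun w hw => cone_hole hbool hone hsq hE w hw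
  have g4 : InCone Ax (∑ v ∈ Icc 1 n,
      ((∑ w ∈ Icc 1 (k - 1), X (ERVar.r v) * X (ERVar.q v w)) - X (ERVar.r v))) := by
    refine inCone_sum _ _ fun v hv => ?_
    refine inCone_of_eq ((hD v hv).add
      (inCone_base' ∅ ∅ (hbool ⟨ERVar.r v, Or.inl rfl⟩)
        (by
          have := deg_bool (σ := ERVar) (ERVar.r v)
          simp only [Finset.card_empty]
          omega)
        (expandTerm_nil _))) ?_
    rw [← Finset.mul_sum]
    ring
  refine inCone_of_eq (((g1.add g2).add g3).add g4) ?_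
  have c1 : ∑ v ∈ Icc 1 n, ((X (ERVar.r v) : MvPolynomial ERVar ℝ)
        - ∑ u ∈ Icc 1 k, X (ERVar.p u v))
      = (∑ v ∈ Icc 1 n, X (ERVar.r v))
        - ∑ u ∈ Icc 1 k, ∑ v ∈ Icc 1 n, X (ERVar.p u v) := by
    rw [Finset.sum_sub_distrib, Finset.sum_comm]
  have c2 : ∑ u ∈ Icc 1 k, (((∑ v ∈ Icc 1 n, X (ERVar.p u v)) : MvPolynomial ERVar ℝ) - 1)
      = (∑ u ∈ Icc 1 k, ∑ v ∈ Icc 1 n, X (ERVar.p u v)) - (k : MvPolynomial ERVar ℝ) := by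
    rw [Finset.sum_sub_distrib]
    simp [Nat.card_Icc]
  have c3 : ∑ w ∈ Icc 1 (k - 1),
        ((1 : MvPolynomial ERVar ℝ) - ∑ v ∈ Icc 1 n, X (ERVar.r v) * X (ERVar.q v w))
      = ((k : MvPolynomial ERVar ℝ) - 1)
        - ∑ w ∈ Icc 1 (k - 1), ∑ v ∈ Icc 1 n, X (ERVar.r v) * X (ERVar.q v w) := by
    rw [Finset.sum_sub_distrib]
    have : ((k - 1 : ℕ) : MvPolynomial ERVar ℝ) = (k : MvPolynomial ERVar ℝ) - 1 := by
      rw [Nat.cast_sub hk, Nat.cast_one]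
    simp [Nat.card_Icc, this]
  have c4 : ∑ v ∈ Icc 1 n,
        (((∑ w ∈ Icc 1 (k - 1), X (ERVar.r v) * X (ERVar.q v w)) : MvPolynomial ERVar ℝ)
          - X (ERVar.r v))
      = (∑ w ∈ Icc 1 (k - 1), ∑ v ∈ Icc 1 n, X (ERVar.r v) * X (ERVar.q v w))
        - ∑ v ∈ Icc 1 n, X (ERVar.r v) := by
    rw [Finset.sum_sub_distrib, Finset.sum_comm]
  rw [c1, c2, c3, c4]
  ring

end Main


-- ===================== clause encodings =====================

section Enc

open Finset

lemma deg_three : (3 : MvPolynomial ERVar ℝ).totalDegree = 0 := by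
  rw [← map_ofNat (C : ℝ →+* MvPolynomial ERVar ℝ) 3, totalDegree_C]

lemma deg_two : (2 : MvPolynomial ERVar ℝ).totalDegree = 0 := by
  rw [← map_ofNat (C : ℝ →+* MvPolynomial ERVar ℝ) 2, totalDegree_C]

lemma deg_add {σ : Type} (p q : MvPolynomial σ ℝ) (d : ℕ) (hp : p.totalDegree ≤ d)
    (hq : q.totalDegree ≤ d) : (p + q).totalDegree ≤ d :=
  (totalDegree_add _ _).trans (max_le hp hq)

lemma mem_las_hyp {Q : Set (MvPolynomial ERVar ℝ)} {p : MvPolynomial ERVar ℝ}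
    (h : p ∈ Q) : p ∈ LasAxioms ERVar Q :=
  Set.mem_union_left _ (Set.mem_union_left _ (Set.mem_union_left _ h))

lemma mem_las_bool {Q : Set (MvPolynomial ERVar ℝ)} :
    boolAxioms ERVar ⊆ LasAxioms ERVar Q := fun _ h =>
  Set.mem_union_left _ (Set.mem_union_left _ (Set.mem_union_right _ h))

lemma mem_las_one {Q : Set (MvPolynomial ERVar ℝ)} :
    (1 : MvPolynomial ERVar ℝ) ∈ LasAxioms ERVar Q :=
  Set.mem_union_left _ (Set.mem_union_right _ rfl)

lemma mem_las_sq {Q : Set (MvPolynomial ERVar ℝ)} (q : MvPolynomial ERVar ℝ) :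
    q ^ 2 ∈ LasAxioms ERVar Q :=
  Set.mem_union_right _ ⟨q, rfl⟩

lemma encB (u u' v : ℕ) (h : u ≠ u') :
    encodeIneqSA {(ERVar.p u v, false), (ERVar.p u' v, false)}
      = 1 - X (ERVar.p u v) - X (ERVar.p u' v) := by
  rw [encodeIneqSA, Finset.sum_insert (by simp [h]), Finset.sum_singleton]
  simp
  ring

lemma encC (u v : ℕ) :
    encodeIneqSA {(ERVar.p u v, false), (ERVar.r v, true)}
      = X (ERVar.r v) - X (ERVar.p u v) := by
  rw [encodeIneqSA, Finset.sum_insert (by simp), Finset.sum_singleton]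
  simp
  ring

lemma encA (n u : ℕ) :
    encodeIneqSA ((Finset.Icc 1 n).image (fun v => (ERVar.p u v, true)))
      = (∑ v ∈ Icc 1 n, X (ERVar.p u v)) - 1 := by
  rw [encodeIneqSA, Finset.sum_image (by intro x _ y _ h; simpa using h)]
  simp

lemma encD (k v : ℕ) :
    encodeIneqSA (insert (ERVar.r v, false)
        ((Finset.Icc 1 (k - 1)).image (fun w => (ERVar.q v w, true))))
      = (∑ w ∈ Icc 1 (k - 1), X (ERVar.q v w)) - X (ERVar.r v) := by
  rw [encodeIneqSA, Finset.sum_insert (by simp),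
    Finset.sum_image (by intro x _ y _ h; simpa using h)]
  simp
  ring

lemma encE (v v' w : ℕ) (h : v ≠ v') :
    encodeIneqSA {(ERVar.r v, false), (ERVar.r v', false),
        (ERVar.q v w, false), (ERVar.q v' w, false)}
      = 3 - X (ERVar.r v) - X (ERVar.r v') - X (ERVar.q v w) - X (ERVar.q v' w) := by
  rw [encodeIneqSA, Finset.sum_insert (by simp [h]), Finset.sum_insert (by simp [h]),
    Finset.sum_insert (by simp [h]), Finset.sum_singleton]
  simp
  ring

lemma deg_encE (v v' w : ℕ) :
    (3 - X (ERVar.r v) - X (ERVar.r v') - X (ERVar.q v w) - X (ERVar.q v' w)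
      : MvPolynomial ERVar ℝ).totalDegree ≤ 1 := by
  refine deg_sub _ _ _ (deg_sub _ _ _ (deg_sub _ _ _ (deg_sub _ _ _ ?_ (deg_X_le _))
    (deg_X_le _)) (deg_X_le _)) (deg_X_le _)
  rw [deg_three]
  omega

/-- The `RPHP` instantiation. -/
lemma rphp_cone (n k : ℕ) (hn : 4 ≤ n) (hk : 4 ≤ k) :
    InCone (LasAxioms ERVar ((fun C => encodeIneqSA C) '' RPHP n k)) (-1) := by
  refine main_cone n k (by omega) mem_las_bool mem_las_one mem_las_sq ?_ ?_ ?_ ?_ ?_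
  · -- hA
    intro u hu
    rw [Finset.mem_Icc] at hu
    refine inCone_base' ∅ ∅
      (mem_las_hyp ⟨_, Or.inl ⟨u, hu.1, hu.2, rfl⟩, encA n u⟩) ?_ (expandTerm_nil _)
    have hd : ((∑ v ∈ Icc 1 n, X (ERVar.p u v) : MvPolynomial ERVar ℝ) - 1).totalDegree
        ≤ 1 := deg_sub _ _ _ (deg_sum_le _ _ _ fun v _ => deg_X_le _) (by simp)
    simp only [Finset.card_empty]
    omega
  · -- hB
    intro u hu u' hu' hne v hv
    rw [Finset.mem_Icc] at hu hu' hv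
    exact mem_las_hyp ⟨_, Or.inr (Or.inl ⟨u, u', v, hu.1, hu.2, hu'.1, hu'.2, hne,
      hv.1, hv.2, rfl⟩), encB u u' v hne⟩
  · -- hC
    intro u hu v hv
    rw [Finset.mem_Icc] at hu hv
    exact mem_las_hyp ⟨_, Or.inr (Or.inr (Or.inl ⟨u, v, hu.1, hu.2, hv.1, hv.2, rfl⟩)),
      encC u v⟩
  · -- hD
    intro v hv
    rw [Finset.mem_Icc] at hv
    refine inCone_base' {ERVar.r v} ∅
      (mem_las_hyp ⟨_, Or.inr (Or.inr (Or.inr (Or.inl ⟨v, hv.1, hv.2, rfl⟩))), encD k v⟩)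
      ?_ (expandTerm_I1 _ _)
    have hd : ((∑ w ∈ Icc 1 (k - 1), X (ERVar.q v w) : MvPolynomial ERVar ℝ)
        - X (ERVar.r v)).totalDegree ≤ 1 :=
      deg_sub _ _ _ (deg_sum_le _ _ _ fun w _ => deg_X_le _) (deg_X_le _)
    simp only [Finset.card_singleton, Finset.card_empty]
    omega
  · -- hE
    intro v hv v' hv' hne w hw
    rw [Finset.mem_Icc] at hv hv' hw
    have d12 : ERVar.r v ≠ ERVar.r v' := by simp [hne]
    have d13 : ERVar.r v ≠ ERVar.q v w := by simp
    have d14 : ERVar.r v ≠ ERVar.q v' w := by simp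
    have d23 : ERVar.r v' ≠ ERVar.q v w := by simp
    have d24 : ERVar.r v' ≠ ERVar.q v' w := by simp
    have d34 : ERVar.q v w ≠ ERVar.q v' w := by simp [hne]
    refine inCone_base' {ERVar.r v, ERVar.r v', ERVar.q v w, ERVar.q v' w} ∅
      (mem_las_hyp ⟨_, Or.inr (Or.inr (Or.inr (Or.inr ⟨v, v', w, hv.1, hv.2, hv'.1, hv'.2,
        hne, hw.1, hw.2, rfl⟩))), encE v v' w hne⟩) ?_
      (expandTerm_I4 _ _ _ _ d12 d13 d14 d23 d24 d34 _)
    have h4 := card_le4 (ERVar.r v) (ERVar.r v') (ERVar.q v w) (ERVar.q v' w)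
    have hd := deg_encE v v' w
    simp only [Finset.card_empty]
    omega

end Enc


-- ===================== ERPHP encodings and chains =====================

section EncE

open Finset

lemma encY1 (u : ℕ) :
    encodeIneqSA {(ERVar.p u 1, true), (ERVar.p u 2, true), (ERVar.y u 2, true)}
      = X (ERVar.p u 1) + X (ERVar.p u 2) + X (ERVar.y u 2) - 1 := by
  rw [encodeIneqSA, Finset.sum_insert (by simp), Finset.sum_insert (by simp),
    Finset.sum_singleton]
  simp
  ring

lemma encYc (u v : ℕ) :
    encodeIneqSA {(ERVar.y u v, false), (ERVar.p u (v+1), true), (ERVar.y u (v+1), true)}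
      = X (ERVar.p u (v+1)) + X (ERVar.y u (v+1)) - X (ERVar.y u v) := by
  rw [encodeIneqSA, Finset.sum_insert (by simp), Finset.sum_insert (by simp),
    Finset.sum_singleton]
  simp
  ring

lemma encY3 (n u : ℕ) (hn : 4 ≤ n) :
    encodeIneqSA {(ERVar.y u (n-2), false), (ERVar.p u (n-1), true), (ERVar.p u n, true)}
      = X (ERVar.p u (n-1)) + X (ERVar.p u n) - X (ERVar.y u (n-2)) := by
  rw [encodeIneqSA, Finset.sum_insert (by simp), Finset.sum_insert (by simp; omega),
    Finset.sum_singleton]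
  simp
  ring

lemma encZ1 (v : ℕ) :
    encodeIneqSA {(ERVar.r v, false), (ERVar.q v 1, true), (ERVar.z v 1, true)}
      = X (ERVar.q v 1) + X (ERVar.z v 1) - X (ERVar.r v) := by
  rw [encodeIneqSA, Finset.sum_insert (by simp), Finset.sum_insert (by simp),
    Finset.sum_singleton]
  simp
  ring

lemma encZc (v w : ℕ) :
    encodeIneqSA {(ERVar.z v w, false), (ERVar.q v (w+1), true), (ERVar.z v (w+1), true)}
      = X (ERVar.q v (w+1)) + X (ERVar.z v (w+1)) - X (ERVar.z v w) := by
  rw [encodeIneqSA, Finset.sum_insert (by simp), Finset.sum_insert (by simp),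
    Finset.sum_singleton]
  simp
  ring

lemma encZ3 (k v : ℕ) (hk : 4 ≤ k) :
    encodeIneqSA {(ERVar.z v (k-3), false), (ERVar.q v (k-2), true), (ERVar.q v (k-1), true)}
      = X (ERVar.q v (k-2)) + X (ERVar.q v (k-1)) - X (ERVar.z v (k-3)) := by
  rw [encodeIneqSA, Finset.sum_insert (by simp), Finset.sum_insert (by simp; omega),
    Finset.sum_singleton]
  simp
  ring

lemma encRR (v v' : ℕ) (h : v ≠ v') :
    encodeIneqSA {(ERVar.r v, false), (ERVar.r v', false), (ERVar.rr v v', true)}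
      = X (ERVar.rr v v') + 1 - X (ERVar.r v) - X (ERVar.r v') := by
  rw [encodeIneqSA, Finset.sum_insert (by simp [h]), Finset.sum_insert (by simp),
    Finset.sum_singleton]
  simp
  ring

lemma encQQ (v v' w : ℕ) (h : v ≠ v') :
    encodeIneqSA {(ERVar.rr v v', false), (ERVar.q v w, false), (ERVar.q v' w, false)}
      = 2 - X (ERVar.rr v v') - X (ERVar.q v w) - X (ERVar.q v' w) := by
  rw [encodeIneqSA, Finset.sum_insert (by simp), Finset.sum_insert (by simp [h]),
    Finset.sum_singleton]
  simp
  ring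

lemma chainY (n u : ℕ) (hn : 4 ≤ n) :
    ((X (ERVar.p u 1) + X (ERVar.p u 2) + X (ERVar.y u 2) - 1)
      + ∑ v ∈ Icc 2 (n-3),
          (X (ERVar.p u (v+1)) + X (ERVar.y u (v+1)) - X (ERVar.y u v))
      + (X (ERVar.p u (n-1)) + X (ERVar.p u n) - X (ERVar.y u (n-2)))
      : MvPolynomial ERVar ℝ)
    = (∑ v ∈ Icc 1 n, X (ERVar.p u v)) - 1 := by
  obtain ⟨m, rfl⟩ : ∃ m, n = m + 4 := ⟨n - 4, by omega⟩
  simp only [show m + 4 - 3 = m + 1 by omega, show m + 4 - 2 = m + 2 by omega,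
    show m + 4 - 1 = m + 3 by omega]
  have hsplit : (∑ v ∈ Icc 1 (m + 4), X (ERVar.p u v) : MvPolynomial ERVar ℝ)
      = X (ERVar.p u 1) + X (ERVar.p u 2)
        + (∑ v ∈ Icc 2 (m + 1), X (ERVar.p u (v + 1)))
        + X (ERVar.p u (m + 3)) + X (ERVar.p u (m + 4)) := by
    rw [Finset.sum_Icc_succ_top (by omega), Finset.sum_Icc_succ_top (by omega)]
    have h12 : Icc 1 (m + 2) = insert 1 (insert 2 (Icc 3 (m + 2))) := by
      ext x
      simp only [Finset.mem_Icc, Finset.mem_insert]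
      omega
    have himg : Icc 3 (m + 2) = (Icc 2 (m + 1)).image (· + 1) := by
      rw [Finset.image_add_right_Icc]
    rw [h12, Finset.sum_insert (by simp), Finset.sum_insert (by simp), himg,
      Finset.sum_image (by intro x _ y _ h; beta_reduce at h; omega)]
    ring
  have hsum : (∑ v ∈ Icc 2 (m + 1),
        (X (ERVar.p u (v+1)) + X (ERVar.y u (v+1)) - X (ERVar.y u v))
        : MvPolynomial ERVar ℝ)
      = (∑ v ∈ Icc 2 (m + 1), X (ERVar.p u (v+1)))
        + ∑ v ∈ Icc 2 (m + 1), (X (ERVar.y u (v+1)) - X (ERVar.y u v)) := by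
    rw [← Finset.sum_add_distrib]
    exact Finset.sum_congr rfl fun v _ => by ring
  have htel := telescope (fun v => (X (ERVar.y u v) : MvPolynomial ERVar ℝ)) (m + 1) 2
    (by omega)
  rw [hsum, htel, hsplit]
  ring

lemma chainZ (k v : ℕ) (hk : 4 ≤ k) :
    ((X (ERVar.q v 1) + X (ERVar.z v 1) - X (ERVar.r v))
      + ∑ w ∈ Icc 1 (k-4),
          (X (ERVar.q v (w+1)) + X (ERVar.z v (w+1)) - X (ERVar.z v w))
      + (X (ERVar.q v (k-2)) + X (ERVar.q v (k-1)) - X (ERVar.z v (k-3)))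
      : MvPolynomial ERVar ℝ)
    = (∑ w ∈ Icc 1 (k-1), X (ERVar.q v w)) - X (ERVar.r v) := by
  obtain ⟨j, rfl⟩ : ∃ j, k = j + 4 := ⟨k - 4, by omega⟩
  simp only [show j + 4 - 4 = j by omega, show j + 4 - 3 = j + 1 by omega,
    show j + 4 - 2 = j + 2 by omega, show j + 4 - 1 = j + 3 by omega]
  have hsplit : (∑ w ∈ Icc 1 (j + 3), X (ERVar.q v w) : MvPolynomial ERVar ℝ)
      = X (ERVar.q v 1) + (∑ w ∈ Icc 1 j, X (ERVar.q v (w + 1)))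
        + X (ERVar.q v (j + 2)) + X (ERVar.q v (j + 3)) := by
    rw [Finset.sum_Icc_succ_top (by omega), Finset.sum_Icc_succ_top (by omega)]
    have h1 : Icc 1 (j + 1) = insert 1 (Icc 2 (j + 1)) := by
      ext x
      simp only [Finset.mem_Icc, Finset.mem_insert]
      omega
    have himg : Icc 2 (j + 1) = (Icc 1 j).image (· + 1) := by
      rw [Finset.image_add_right_Icc]
    rw [h1, Finset.sum_insert (by simp), himg,
      Finset.sum_image (by intro x _ y _ h; beta_reduce at h; omega)]
  have hsum : (∑ w ∈ Icc 1 j,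
        (X (ERVar.q v (w+1)) + X (ERVar.z v (w+1)) - X (ERVar.z v w))
        : MvPolynomial ERVar ℝ)
      = (∑ w ∈ Icc 1 j, X (ERVar.q v (w+1)))
        + ∑ w ∈ Icc 1 j, (X (ERVar.z v (w+1)) - X (ERVar.z v w)) := by
    rw [← Finset.sum_add_distrib]
    exact Finset.sum_congr rfl fun w _ => by ring
  have htel := telescope (fun w => (X (ERVar.z v w) : MvPolynomial ERVar ℝ)) j 1 (by omega)
  rw [hsum, htel, hsplit]
  ring

lemma deg3X {a b c : ERVar} : (X a + X b - X c : MvPolynomial ERVar ℝ).totalDegree ≤ 1 :=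
  deg_sub _ _ _ (deg_add _ _ _ (deg_X_le _) (deg_X_le _)) (deg_X_le _)

/-- The `ERPHP` instantiation. -/
lemma erphp_cone (n k : ℕ) (hn : 4 ≤ n) (hk : 4 ≤ k) :
    InCone (LasAxioms ERVar ((fun C => encodeIneqSA C) '' ERPHP n k)) (-1) := by
  refine main_cone n k (by omega) mem_las_bool mem_las_one mem_las_sq ?_ ?_ ?_ ?_ ?_
  · -- hA via the y-chain
    intro u hu
    rw [Finset.mem_Icc] at hu
    have b1 : InCone (LasAxioms ERVar ((fun C => encodeIneqSA C) '' ERPHP n k))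
        (X (ERVar.p u 1) + X (ERVar.p u 2) + X (ERVar.y u 2) - 1) := by
      refine inCone_base' ∅ ∅
        (mem_las_hyp ⟨_, Or.inl ⟨u, hu.1, hu.2, rfl⟩, encY1 u⟩) ?_ (expandTerm_nil _)
      have hd : (X (ERVar.p u 1) + X (ERVar.p u 2) + X (ERVar.y u 2) - 1
          : MvPolynomial ERVar ℝ).totalDegree ≤ 1 :=
        deg_sub _ _ _ (deg_add _ _ _ (deg_add _ _ _ (deg_X_le _) (deg_X_le _))
          (deg_X_le _)) (by simp)
      simp only [Finset.card_empty]
      omega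
    have b2 : InCone (LasAxioms ERVar ((fun C => encodeIneqSA C) '' ERPHP n k))
        (∑ v ∈ Finset.Icc 2 (n-3),
          (X (ERVar.p u (v+1)) + X (ERVar.y u (v+1)) - X (ERVar.y u v))) := by
      refine inCone_sum _ _ fun v hv => ?_
      rw [Finset.mem_Icc] at hv
      refine inCone_base' ∅ ∅
        (mem_las_hyp ⟨_, Or.inr (Or.inl ⟨u, v, hu.1, hu.2, hv.1, hv.2, rfl⟩), encYc u v⟩)
        ?_ (expandTerm_nil _)
      have hd := deg3X (a := ERVar.p u (v+1)) (b := ERVar.y u (v+1)) (c := ERVar.y u v)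
      simp only [Finset.card_empty]
      omega
    have b3 : InCone (LasAxioms ERVar ((fun C => encodeIneqSA C) '' ERPHP n k))
        (X (ERVar.p u (n-1)) + X (ERVar.p u n) - X (ERVar.y u (n-2))) := by
      refine inCone_base' ∅ ∅
        (mem_las_hyp ⟨_, Or.inr (Or.inr (Or.inl ⟨u, hu.1, hu.2, rfl⟩)), encY3 n u hn⟩)
        ?_ (expandTerm_nil _)
      have hd := deg3X (a := ERVar.p u (n-1)) (b := ERVar.p u n) (c := ERVar.y u (n-2))
      simp only [Finset.card_empty]
      omega
    exact inCone_of_eq ((b1.add b2).add b3) (chainY n u hn)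
  · -- hB
    intro u hu u' hu' hne v hv
    rw [Finset.mem_Icc] at hu hu' hv
    exact mem_las_hyp ⟨_, Or.inr (Or.inr (Or.inr (Or.inr (Or.inr (Or.inr (Or.inl
      ⟨u, u', v, hu.1, hu.2, hu'.1, hu'.2, hne, hv.1, hv.2, rfl⟩)))))), encB u u' v hne⟩
  · -- hC
    intro u hu v hv
    rw [Finset.mem_Icc] at hu hv
    exact mem_las_hyp ⟨_, Or.inr (Or.inr (Or.inr (Or.inr (Or.inr (Or.inr (Or.inr (Or.inl
      ⟨u, v, hu.1, hu.2, hv.1, hv.2, rfl⟩))))))), encC u v⟩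
  · -- hD via the z-chain
    intro v hv
    rw [Finset.mem_Icc] at hv
    have b1 : InCone (LasAxioms ERVar ((fun C => encodeIneqSA C) '' ERPHP n k))
        (X (ERVar.r v) * (X (ERVar.q v 1) + X (ERVar.z v 1) - X (ERVar.r v))) := by
      refine inCone_base' {ERVar.r v} ∅
        (mem_las_hyp ⟨_, Or.inr (Or.inr (Or.inr (Or.inl ⟨v, hv.1, hv.2, rfl⟩))), encZ1 v⟩)
        ?_ (expandTerm_I1 _ _)
      have hd := deg3X (a := ERVar.q v 1) (b := ERVar.z v 1) (c := ERVar.r v)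
      simp only [Finset.card_singleton, Finset.card_empty]
      omega
    have b2 : InCone (LasAxioms ERVar ((fun C => encodeIneqSA C) '' ERPHP n k))
        (∑ w ∈ Finset.Icc 1 (k-4), X (ERVar.r v) *
          (X (ERVar.q v (w+1)) + X (ERVar.z v (w+1)) - X (ERVar.z v w))) := by
      refine inCone_sum _ _ fun w hw => ?_
      rw [Finset.mem_Icc] at hw
      refine inCone_base' {ERVar.r v} ∅
        (mem_las_hyp ⟨_, Or.inr (Or.inr (Or.inr (Or.inr (Or.inl
          ⟨v, w, hv.1, hv.2, hw.1, hw.2, rfl⟩)))), encZc v w⟩) ?_ (expandTerm_I1 _ _)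
      have hd := deg3X (a := ERVar.q v (w+1)) (b := ERVar.z v (w+1)) (c := ERVar.z v w)
      simp only [Finset.card_singleton, Finset.card_empty]
      omega
    have b3 : InCone (LasAxioms ERVar ((fun C => encodeIneqSA C) '' ERPHP n k))
        (X (ERVar.r v) * (X (ERVar.q v (k-2)) + X (ERVar.q v (k-1)) - X (ERVar.z v (k-3)))) := by
      refine inCone_base' {ERVar.r v} ∅
        (mem_las_hyp ⟨_, Or.inr (Or.inr (Or.inr (Or.inr (Or.inr (Or.inl
          ⟨v, hv.1, hv.2, rfl⟩))))), encZ3 k v hk⟩) ?_ (expandTerm_I1 _ _)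
      have hd := deg3X (a := ERVar.q v (k-2)) (b := ERVar.q v (k-1)) (c := ERVar.z v (k-3))
      simp only [Finset.card_singleton, Finset.card_empty]
      omega
    refine inCone_of_eq ((b1.add b2).add b3) ?_
    rw [← Finset.mul_sum, ← mul_add, ← mul_add]
    rw [chainZ k v hk]
  · -- hE via the rr-clauses
    intro v hv v' hv' hne w hw
    rw [Finset.mem_Icc] at hv hv' hw
    have d12 : ERVar.r v ≠ ERVar.r v' := by simp [hne]
    have d13 : ERVar.r v ≠ ERVar.q v w := by simp
    have d14 : ERVar.r v ≠ ERVar.q v' w := by simp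
    have d23 : ERVar.r v' ≠ ERVar.q v w := by simp
    have d24 : ERVar.r v' ≠ ERVar.q v' w := by simp
    have d34 : ERVar.q v w ≠ ERVar.q v' w := by simp [hne]
    have h4 := card_le4 (ERVar.r v) (ERVar.r v') (ERVar.q v w) (ERVar.q v' w)
    have b1 : InCone (LasAxioms ERVar ((fun C => encodeIneqSA C) '' ERPHP n k))
        (X (ERVar.r v) * X (ERVar.r v') * X (ERVar.q v w) * X (ERVar.q v' w) *
          (X (ERVar.rr v v') + 1 - X (ERVar.r v) - X (ERVar.r v'))) := by
      refine inCone_base' {ERVar.r v, ERVar.r v', ERVar.q v w, ERVar.q v' w} ∅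
        (mem_las_hyp ⟨_, Or.inr (Or.inr (Or.inr (Or.inr (Or.inr (Or.inr (Or.inr (Or.inr
          (Or.inl ⟨v, v', hv.1, hv.2, hv'.1, hv'.2, hne, rfl⟩)))))))), encRR v v' hne⟩)
        ?_ (expandTerm_I4 _ _ _ _ d12 d13 d14 d23 d24 d34 _)
      have hd : (X (ERVar.rr v v') + 1 - X (ERVar.r v) - X (ERVar.r v')
          : MvPolynomial ERVar ℝ).totalDegree ≤ 1 :=
        deg_sub _ _ _ (deg_sub _ _ _ (deg_add _ _ _ (deg_X_le _) (by simp)) (deg_X_le _))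
          (deg_X_le _)
      simp only [Finset.card_empty]
      omega
    have b2 : InCone (LasAxioms ERVar ((fun C => encodeIneqSA C) '' ERPHP n k))
        (X (ERVar.r v) * X (ERVar.r v') * X (ERVar.q v w) * X (ERVar.q v' w) *
          (2 - X (ERVar.rr v v') - X (ERVar.q v w) - X (ERVar.q v' w))) := by
      refine inCone_base' {ERVar.r v, ERVar.r v', ERVar.q v w, ERVar.q v' w} ∅
        (mem_las_hyp ⟨_, Or.inr (Or.inr (Or.inr (Or.inr (Or.inr (Or.inr (Or.inr (Or.inr
          (Or.inr ⟨v, v', w, hv.1, hv.2, hv'.1, hv'.2, hne, hw.1, hw.2, rfl⟩)))))))),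
          encQQ v v' w hne⟩)
        ?_ (expandTerm_I4 _ _ _ _ d12 d13 d14 d23 d24 d34 _)
      have hd : (2 - X (ERVar.rr v v') - X (ERVar.q v w) - X (ERVar.q v' w)
          : MvPolynomial ERVar ℝ).totalDegree ≤ 1 :=
        deg_sub _ _ _ (deg_sub _ _ _ (deg_sub _ _ _ (by rw [deg_two]; omega) (deg_X_le _))
          (deg_X_le _)) (deg_X_le _)
      simp only [Finset.card_empty]
      omega
    exact inCone_of_eq (b1.add b2) (by ring)

end EncE

/-- for all `k ≥ 4` and `n ≥ 4` with `n ≥ k`, both the formula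
`RPHP` and the 3-CNF formula `ERPHP` have Lasserre refutations of rank 9. -/
theorem rphp_erphp_lasserre_rank_nine (n k : ℕ) (hn : 4 ≤ n) (hk : 4 ≤ k)
    (hkn : k ≤ n) :
    (∃ d : SAStyleDeriv ERVar
        (LasAxioms ERVar ((fun C => encodeIneqSA C) '' RPHP n k)) (-1),
      d.rankLE 9) ∧
    (∃ d : SAStyleDeriv ERVar
        (LasAxioms ERVar ((fun C => encodeIneqSA C) '' ERPHP n k)) (-1),
      d.rankLE 9) :=
  ⟨rphp_cone n k hn hk, erphp_cone n k hn hk⟩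

end NarrowProofs
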